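/- arXiv:1211.2662 — 10 statements merged into one kernel-verified Lean document; each statement's English description precedes it below -/
import Mathlib

section
/- If S is a strongly connected component of the pair-digraph H+, then the set S' = {(u,v) : (v,u) ∈ S} is also a strongly connected component of H+. -/
variable {V : Type*}

/-- Arc of the pair-digraph H⁺: from (u,v) to (u',v) when u,v have the same color,
uu' is an edge and vu' is a non-edge; from (u,v) to (u,v') when u,v have different
colors, vv' is an edge and uv is a non-edge.  Vertices of H⁺ are pairs of distinct
vertices of H. -/
def PDArc (G : SimpleGraph V) (c : V → Bool) (p q : V × V) : Prop :=
  p.1 ≠ p.2 ∧ q.1 ≠ q.2 ∧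
    ((c p.1 = c p.2 ∧ q.2 = p.2 ∧ G.Adj p.1 q.1 ∧ ¬ G.Adj p.2 q.1) ∨
     (c p.1 ≠ c p.2 ∧ q.1 = p.1 ∧ G.Adj p.2 q.2 ∧ ¬ G.Adj p.1 p.2))

/-- Reachability by directed paths in the pair-digraph. -/
def PDReach (G : SimpleGraph V) (c : V → Bool) : V × V → V × V → Prop :=
  Relation.ReflTransGen (PDArc G c)

/-- `S` is a strongly connected component of the pair-digraph. -/
def PDSCC (G : SimpleGraph V) (c : V → Bool) (S : Set (V × V)) : Prop :=
  S.Nonempty ∧ ∀ p ∈ S, ∀ q, q ∈ S ↔ (PDReach G c p q ∧ PDReach G c q p)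

/-- A non-trivial strongly connected component (more than one vertex). -/
def PDSCCNontriv (G : SimpleGraph V) (c : V → Bool) (S : Set (V × V)) : Prop :=
  PDSCC G c S ∧ ∃ p ∈ S, ∃ q ∈ S, p ≠ q

/-- The coupled set S' = {(u,v) : (v,u) ∈ S}. -/
def PDCoupled (S : Set (V × V)) : Set (V × V) := {p | (p.2, p.1) ∈ S}

/-- A linear ordering avoids the forbidden patterns: there are no a < b < x with
a, b in the same color class, x in the opposite one, ax an edge and bx a non-edge. -/
def GoodOrder (G : SimpleGraph V) (c : V → Bool) (r : LinearOrder V) : Prop :=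
  ∀ a b x : V, r.lt a b → r.lt b x → c a = c b → c a ≠ c x → G.Adj a x → G.Adj b x

/-- `ab` and `xy` are independent edges: the four vertices are distinct and induce
exactly the two edges `ab` and `xy`. -/
def IndepEdges (G : SimpleGraph V) (a b x y : V) : Prop :=
  a ≠ b ∧ a ≠ x ∧ a ≠ y ∧ b ≠ x ∧ b ≠ y ∧ x ≠ y ∧
    G.Adj a b ∧ G.Adj x y ∧ ¬ G.Adj a x ∧ ¬ G.Adj a y ∧ ¬ G.Adj b x ∧ ¬ G.Adj b y


lemma pd_arc_swap (G : SimpleGraph V) (c : V → Bool)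
    (hbip : ∀ x y : V, G.Adj x y → c x ≠ c y)
    {p q : V × V} (h : PDArc G c p q) :
    PDArc G c (q.2, q.1) (p.2, p.1) := by
  obtain ⟨hp, hq, h | h⟩ := h
  · obtain ⟨hc, he, ha, hna⟩ := h
    refine ⟨fun hh => hq hh.symm, fun hh => hp hh.symm, Or.inr ?_⟩
    have h1 : c p.1 ≠ c q.1 := hbip _ _ ha
    refine ⟨?_, he.symm, ha.symm, ?_⟩
    · simp only [he]; intro hh; exact h1 (hc.trans hh)
    · simpa [he] using hna
  · obtain ⟨hc, he, ha, hna⟩ := h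
    refine ⟨fun hh => hq hh.symm, fun hh => hp hh.symm, Or.inl ?_⟩
    have h1 : c p.2 ≠ c q.2 := hbip _ _ ha
    refine ⟨?_, he.symm, ha.symm, ?_⟩
    · simp only [he]
      cases hcp : c p.1 <;> cases hcp2 : c p.2 <;> cases hcq : c q.2 <;> simp_all
    · simpa [he] using hna

lemma pd_reach_swap (G : SimpleGraph V) (c : V → Bool)
    (hbip : ∀ x y : V, G.Adj x y → c x ≠ c y)
    {p q : V × V} (h : PDReach G c p q) :
    PDReach G c (q.2, q.1) (p.2, p.1) := by
  induction h with
  | refl => exact Relation.ReflTransGen.refl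
  | tail _ harc ih => exact Relation.ReflTransGen.head (pd_arc_swap G c hbip harc) ih

/-- If S is a strongly connected component of H⁺, so is S' = {(u,v) : (v,u) ∈ S}. -/
theorem stmt4 (G : SimpleGraph V) (c : V → Bool)
    (hbip : ∀ x y : V, G.Adj x y → c x ≠ c y)
    (S : Set (V × V)) (hS : PDSCC G c S) :
    PDSCC G c (PDCoupled S) := by
  obtain ⟨⟨p0, hp0⟩, hiff⟩ := hS
  constructor
  · exact ⟨(p0.2, p0.1), by simpa [PDCoupled] using hp0⟩
  · intro p hp q
    have hpS : (p.2, p.1) ∈ S := hp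
    have := hiff _ hpS (q.2, q.1)
    constructor
    · intro hq
      have h2 := (this.mp hq)
      exact ⟨by simpa using pd_reach_swap G c hbip h2.2,
             by simpa using pd_reach_swap G c hbip h2.1⟩
    · intro ⟨h1, h2⟩
      exact this.mpr ⟨pd_reach_swap G c hbip h2, pd_reach_swap G c hbip h1⟩
end

section
/- If the pair-digraph H+ contains a pair (u,v) such that (u,v) and (v,u) lie in the same strongly connected component (i.e., each is reachable from the other), then H admits no linear ordering of its vertices avoiding the forbidden patterns. -/
variable {V : Type*}

/-- If (u,v) and (v,u) are mutually reachable in H⁺, then H has no linear ordering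
avoiding the forbidden patterns. -/
theorem stmt5 (G : SimpleGraph V) (c : V → Bool)
    (hbip : ∀ x y : V, G.Adj x y → c x ≠ c y)
    (u v : V) (huv : u ≠ v)
    (h1 : PDReach G c (u, v) (v, u)) (h2 : PDReach G c (v, u) (u, v)) :
    ∀ r : LinearOrder V, ¬ GoodOrder G c r := by
  intro r hg
  letI : LinearOrder V := r
  have key : ∀ p q : V × V, PDArc G c p q → p.1 < p.2 → q.1 < q.2 := by
    rintro ⟨a, b⟩ ⟨a', b'⟩ ⟨hab, hab', hcase⟩ hlt
    rcases hcase with ⟨hc, hb, hadj, hnadj⟩ | ⟨hc, ha, hadj, hnadj⟩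
    · simp only at hb hc hadj hnadj hab' ⊢
      subst hb
      rcases lt_trichotomy a' b' with h | h | h
      · exact h
      · exact absurd h hab'
      · exact absurd (hg a b' a' hlt h hc (hbip a a' hadj) hadj) hnadj
    · simp only at ha hc hadj hnadj hab' ⊢
      subst ha
      rcases lt_trichotomy a' b' with h | h | h
      · exact h
      · exact absurd h hab'
      · have hcab : c b' = c a' := by
          have h1 := hbip b b' hadj
          rcases Bool.eq_false_or_eq_true (c b) with hb | hb <;>
            rcases Bool.eq_false_or_eq_true (c a') with ha | ha <;>
            rcases Bool.eq_false_or_eq_true (c b') with hb' | hb' <;>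
            simp_all
        exact absurd (hg b' a' b h hlt hcab (fun e => hc (hcab ▸ e)) hadj.symm) hnadj
  have trans : ∀ p q : V × V, PDReach G c p q → p.1 < p.2 → q.1 < q.2 := by
    intro p q h
    induction h with
    | refl => exact id
    | tail _ harc ih => exact fun hlt => key _ _ harc (ih hlt)
  rcases lt_trichotomy u v with h | h | h
  · exact absurd (trans _ _ h1 h) (not_lt.2 h.le)
  · exact huv h
  · exact absurd (trans _ _ h2 h) (not_lt.2 h.le)
end

section
/- If ab and cd are independent edges of H (the induced subgraph on {a,b,c,d} has exactly the two edges ab and cd), then the pairs (a,c), (a,d), (b,c), (b,d) all lie in one strongly connected component of H+; in particular, if a and c have the same color, then (a,c), (b,c), (b,d), (a,d) form a directed closed walk of length four in H+ in that cyclic order. -/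
variable {V : Type*}

lemma cyc4reach {α : Type*} {r : α → α → Prop} {p1 p2 p3 p4 p q : α}
    (h1 : r p1 p2) (h2 : r p2 p3) (h3 : r p3 p4) (h4 : r p4 p1)
    (hp : p = p1 ∨ p = p2 ∨ p = p3 ∨ p = p4)
    (hq : q = p1 ∨ q = p2 ∨ q = p3 ∨ q = p4) :
    Relation.ReflTransGen r p q := by
  have s1 : Relation.ReflTransGen r p1 p2 := .single h1
  have s2 : Relation.ReflTransGen r p2 p3 := .single h2
  have s3 : Relation.ReflTransGen r p3 p4 := .single h3
  have s4 : Relation.ReflTransGen r p4 p1 := .single h4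
  rcases hp with rfl|rfl|rfl|rfl <;> rcases hq with rfl|rfl|rfl|rfl <;>
    first
      | exact .refl
      | exact s1 | exact s2 | exact s3 | exact s4
      | exact s1.trans s2 | exact s2.trans s3 | exact s3.trans s4 | exact s4.trans s1
      | exact (s1.trans s2).trans s3 | exact (s2.trans s3).trans s4
      | exact (s3.trans s4).trans s1 | exact (s4.trans s1).trans s2

/-- Independent edges ab, xy put the four pairs (a,x), (a,y), (b,x), (b,y) into one
strongly connected component of H⁺; if a and x have the same color they form a
directed four-cycle in the order (a,x), (b,x), (b,y), (a,y). -/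
theorem stmt6 (G : SimpleGraph V) (c : V → Bool)
    (hbip : ∀ x y : V, G.Adj x y → c x ≠ c y)
    (a b x y : V) (hind : IndepEdges G a b x y) :
    (∀ p ∈ ({(a, x), (a, y), (b, x), (b, y)} : Set (V × V)),
      ∀ q ∈ ({(a, x), (a, y), (b, x), (b, y)} : Set (V × V)), PDReach G c p q) ∧
    (c a = c x →
      PDArc G c (a, x) (b, x) ∧ PDArc G c (b, x) (b, y) ∧
      PDArc G c (b, y) (a, y) ∧ PDArc G c (a, y) (a, x)) := by
  obtain ⟨hab, hax, hay, hbx, hby, hxy, eab, exy, nax, nay, nbx, nby⟩ := hind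
  have cab := hbip a b eab
  have cxy := hbip x y exy
  have nxb : ¬ G.Adj x b := fun h => nbx h.symm
  have nya : ¬ G.Adj y a := fun h => nay h.symm
  have nyb : ¬ G.Adj y b := fun h => nby h.symm
  have nxa : ¬ G.Adj x a := fun h => nax h.symm
  by_cases hc : c a = c x
  · have cby : c b = c y := by
      cases hca : c a <;> cases hcb : c b <;> cases hcx : c x <;> cases hcy : c y <;>
        simp_all
    have cay : c a ≠ c y := fun h => cxy (hc.symm.trans h)
    have cbx : c b ≠ c x := fun h => cab (h.trans hc.symm).symm
    have A1 : PDArc G c (a, x) (b, x) :=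
      ⟨hax, hbx, Or.inl ⟨hc, rfl, eab, nxb⟩⟩
    have A2 : PDArc G c (b, x) (b, y) :=
      ⟨hbx, hby, Or.inr ⟨cbx, rfl, exy, nbx⟩⟩
    have A3 : PDArc G c (b, y) (a, y) :=
      ⟨hby, hay, Or.inl ⟨cby, rfl, eab.symm, nya⟩⟩
    have A4 : PDArc G c (a, y) (a, x) :=
      ⟨hay, hax, Or.inr ⟨cay, rfl, exy.symm, nay⟩⟩
    refine ⟨?_, fun _ => ⟨A1, A2, A3, A4⟩⟩
    intro p hp q hq
    simp only [Set.mem_insert_iff, Set.mem_singleton_iff] at hp hq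
    refine cyc4reach A1 A2 A3 A4 ?_ ?_
    · rcases hp with h|h|h|h
      exacts [Or.inl h, Or.inr (Or.inr (Or.inr h)), Or.inr (Or.inl h), Or.inr (Or.inr (Or.inl h))]
    · rcases hq with h|h|h|h
      exacts [Or.inl h, Or.inr (Or.inr (Or.inr h)), Or.inr (Or.inl h), Or.inr (Or.inr (Or.inl h))]
  · have cay : c a = c y := by
      cases hca : c a <;> cases hcx : c x <;> cases hcy : c y <;> simp_all
    have cbx : c b = c x := by
      cases hca : c a <;> cases hcb : c b <;> cases hcx : c x <;> simp_all
    have cby : c b ≠ c y := fun h => cab (h.trans cay.symm).symm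
    have A1 : PDArc G c (a, x) (a, y) :=
      ⟨hax, hay, Or.inr ⟨hc, rfl, exy, nax⟩⟩
    have A2 : PDArc G c (a, y) (b, y) :=
      ⟨hay, hby, Or.inl ⟨cay, rfl, eab, nyb⟩⟩
    have A3 : PDArc G c (b, y) (b, x) :=
      ⟨hby, hbx, Or.inr ⟨cby, rfl, exy.symm, nby⟩⟩
    have A4 : PDArc G c (b, x) (a, x) :=
      ⟨hbx, hax, Or.inl ⟨cbx, rfl, eab.symm, nxa⟩⟩
    refine ⟨?_, fun h => absurd h hc⟩
    intro p hp q hq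
    simp only [Set.mem_insert_iff, Set.mem_singleton_iff] at hp hq
    refine cyc4reach A1 A2 A3 A4 ?_ ?_
    · rcases hp with h|h|h|h
      exacts [Or.inl h, Or.inr (Or.inl h), Or.inr (Or.inr (Or.inr h)), Or.inr (Or.inr (Or.inl h))]
    · rcases hq with h|h|h|h
      exacts [Or.inl h, Or.inr (Or.inl h), Or.inr (Or.inr (Or.inr h)), Or.inr (Or.inr (Or.inl h))]
end

section
/- If S is a non-trivial strongly connected component of the pair-digraph H+ containing the vertex (u,v), then there exist vertices u' and v' of H such that uu' and vv' are independent edges of H, and S contains the four vertices (u,v), (u,v'), (u',v), (u',v'). -/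
variable {V : Type*}

private lemma bool_eq_of_ne_of_ne {a b d : Bool} (h1 : a ≠ b) (h2 : d ≠ b) : a = d := by
  cases a <;> cases b <;> cases d <;> simp_all

/-- A non-trivial component containing (u,v) yields independent edges uu', vv' and
contains the four pairs (u,v), (u,v'), (u',v), (u',v'). -/
theorem stmt7 (G : SimpleGraph V) (c : V → Bool)
    (hbip : ∀ x y : V, G.Adj x y → c x ≠ c y)
    (S : Set (V × V)) (hS : PDSCCNontriv G c S)
    (u v : V) (huv : (u, v) ∈ S) :
    ∃ u' v' : V, IndepEdges G u u' v v' ∧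
      (u, v') ∈ S ∧ (u', v) ∈ S ∧ (u', v') ∈ S := by
  obtain ⟨⟨hne, hmem⟩, p0, hp0, q0, hq0, hpq⟩ := hS
  obtain ⟨w, hw, hwne⟩ : ∃ w ∈ S, w ≠ (u, v) := by
    by_cases h : p0 = (u, v)
    · exact ⟨q0, hq0, fun e => hpq (h.trans e.symm)⟩
    · exact ⟨p0, hp0, h⟩
  obtain ⟨hfw, hwb⟩ := (hmem _ huv w).1 hw
  obtain ⟨r, har, hrw⟩ : ∃ r, PDArc G c (u, v) r ∧ PDReach G c r w := by
    rcases Relation.ReflTransGen.cases_head hfw with h | h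
    · exact absurd h.symm hwne
    · exact h
  have hrS : r ∈ S := (hmem _ huv r).2
    ⟨Relation.ReflTransGen.single har, hrw.trans hwb⟩
  by_cases hc : c u = c v
  · -- same-color case: use the first arc out and the last arc in
    obtain ⟨s, hws, has⟩ : ∃ s, PDReach G c w s ∧ PDArc G c s (u, v) := by
      rcases Relation.ReflTransGen.cases_tail hwb with h | h
      · exact absurd h.symm hwne
      · exact h
    have hsS : s ∈ S := (hmem _ huv s).2
      ⟨hfw.trans hws, Relation.ReflTransGen.single has⟩
    obtain ⟨ru, rv⟩ := r
    obtain ⟨su, sv⟩ := s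
    obtain ⟨huvne, hrne, hbr⟩ := id har
    obtain ⟨hsne, _, hbs⟩ := id has
    replace huvne : u ≠ v := huvne
    rcases hbr with ⟨_, hr2, hadj, hnadj⟩ | ⟨h, _⟩
    swap
    · exact absurd hc h
    replace hr2 : rv = v := hr2
    subst rv
    replace hrne : ru ≠ v := hrne
    replace hadj : G.Adj u ru := hadj
    replace hnadj : ¬ G.Adj v ru := hnadj
    rcases hbs with ⟨hcs, hv2, hadjs, _⟩ | ⟨hcs, hu1, hadjs, hnadjs⟩
    · replace hv2 : v = sv := hv2
      subst hv2
      replace hcs : c su = c v := hcs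
      replace hadjs : G.Adj su u := hadjs
      exact absurd (hcs.trans hc.symm) (hbip su u hadjs)
    · replace hu1 : u = su := hu1
      subst hu1
      replace hcs : c u ≠ c sv := hcs
      replace hsne : u ≠ sv := hsne
      replace hadjs : G.Adj sv v := hadjs
      replace hnadjs : ¬ G.Adj u sv := hnadjs
      have hcru : c u ≠ c ru := hbip u ru hadj
      have hcc : c ru = c sv := bool_eq_of_ne_of_ne (Ne.symm hcru) (Ne.symm hcs)
      have hnegu'v' : ¬ G.Adj ru sv := fun h => hbip ru sv h hcc
      have hnuv : ¬ G.Adj u v := fun h => hbip u v h hc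
      have hrusv : ru ≠ sv := fun h => hnadj (h ▸ hadjs.symm)
      have arc1 : PDArc G c (ru, v) (ru, sv) := by
        refine ⟨hrne, hrusv, Or.inr ⟨?_, rfl, hadjs.symm, fun h => hnadj h.symm⟩⟩
        exact fun h => hcru (hc.trans h.symm)
      have arc2 : PDArc G c (ru, sv) (u, sv) := by
        exact ⟨hrusv, hsne, Or.inl ⟨hcc, rfl, hadj.symm, fun h => hnadjs h.symm⟩⟩
      have hreach1 : PDReach G c (u, v) (ru, sv) :=
        ((hmem _ huv (ru, v)).1 hrS).1.trans (Relation.ReflTransGen.single arc1)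
      have hreach2 : PDReach G c (ru, sv) (u, v) :=
        (Relation.ReflTransGen.single arc2).trans ((hmem _ huv (u, sv)).1 hsS).2
      have h4 : (ru, sv) ∈ S := (hmem _ huv (ru, sv)).2 ⟨hreach1, hreach2⟩
      exact ⟨ru, sv,
        ⟨hadj.ne, huvne, hsne, hrne, hrusv, hadjs.ne.symm,
          hadj, hadjs.symm, hnuv, hnadjs, fun h => hnadj h.symm, hnegu'v'⟩,
        hsS, hrS, h4⟩
  · -- different-color case: use the first two arcs out
    obtain ⟨ru, rv⟩ := r
    obtain ⟨huvne, hrne, hbr⟩ := id har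
    replace huvne : u ≠ v := huvne
    rcases hbr with ⟨h, _⟩ | ⟨_, hr1, hadj, hnadj⟩
    · exact absurd h hc
    replace hr1 : ru = u := hr1
    subst ru
    replace hrne : u ≠ rv := hrne
    replace hadj : G.Adj v rv := hadj
    replace hnadj : ¬ G.Adj u v := hnadj
    have hrne_uv : ((u, rv) : V × V) ≠ (u, v) := by
      intro e
      exact hadj.ne (congrArg Prod.snd e).symm
    have hcur : c u = c rv := bool_eq_of_ne_of_ne hc (Ne.symm (hbip v rv hadj))
    obtain ⟨r2, har2, hr2b⟩ : ∃ r2, PDArc G c (u, rv) r2 ∧ PDReach G c r2 (u, v) := by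
      rcases Relation.ReflTransGen.cases_head ((hmem _ huv (u, rv)).1 hrS).2 with h | h
      · exact absurd h hrne_uv
      · exact h
    have hr2S : r2 ∈ S := (hmem _ huv r2).2
      ⟨Relation.ReflTransGen.head har (Relation.ReflTransGen.single har2), hr2b⟩
    obtain ⟨su, sv⟩ := r2
    obtain ⟨_, hr2ne, hbr2⟩ := id har2
    rcases hbr2 with ⟨_, hs2, hadj2, hnadj2⟩ | ⟨h, _⟩
    swap
    · exact absurd hcur h
    replace hs2 : sv = rv := hs2
    subst sv
    replace hr2ne : su ≠ rv := hr2ne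
    replace hadj2 : G.Adj u su := hadj2
    replace hnadj2 : ¬ G.Adj rv su := hnadj2
    have hcsu : c su = c v := bool_eq_of_ne_of_ne (Ne.symm (hbip u su hadj2)) (Ne.symm hc)
    have hsuv : su ≠ v := fun h => hnadj (h ▸ hadj2)
    have hnusv : ¬ G.Adj u rv := fun h => hbip u rv h hcur
    have hnsuv : ¬ G.Adj su v := fun h => hbip su v h hcsu
    have arc3 : PDArc G c (su, rv) (su, v) := by
      refine ⟨hr2ne, hsuv, Or.inr ⟨?_, rfl, hadj.symm, fun h => hnadj2 h.symm⟩⟩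
      intro h
      exact hc ((hcsu.symm.trans h).trans hcur.symm).symm
    have arc4 : PDArc G c (su, v) (u, v) := by
      exact ⟨hsuv, huvne, Or.inl ⟨hcsu, rfl, hadj2.symm, fun h => hnadj h.symm⟩⟩
    have hreach1 : PDReach G c (u, v) (su, v) :=
      ((hmem _ huv (su, rv)).1 hr2S).1.trans (Relation.ReflTransGen.single arc3)
    have hreach2 : PDReach G c (su, v) (u, v) := Relation.ReflTransGen.single arc4
    have h3 : (su, v) ∈ S := (hmem _ huv (su, v)).2 ⟨hreach1, hreach2⟩
    exact ⟨su, rv,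
      ⟨hadj2.ne, huvne, hrne, hsuv, hr2ne, hadj.ne,
        hadj2, hadj, hnadj, hnusv, hnsuv, fun h => hnadj2 h.symm⟩,
      hrS, h3, hr2S⟩
end

section
/- Every non-trivial strongly connected component of the pair-digraph H+ contains at least four vertices. -/
variable {V : Type*}

private lemma pd_arc_ne {G : SimpleGraph V} {c : V → Bool} {p q : V × V}
    (h : PDArc G c p q) : p ≠ q := by
  rcases h with ⟨_, _, ⟨_, _, hadj, _⟩ | ⟨_, _, hadj, _⟩⟩ <;>
    · intro he; subst he; exact G.loopless.irrefl _ hadj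

private lemma pd_arc_parity {G : SimpleGraph V} {c : V → Bool}
    (hbip : ∀ x y : V, G.Adj x y → c x ≠ c y) {p q : V × V}
    (h : PDArc G c p q) : (c p.1 = c p.2) ↔ ¬ (c q.1 = c q.2) := by
  have key : ∀ x y z : Bool, x ≠ y → z ≠ y → x = z := by decide
  rcases h with ⟨_, _, ⟨hc, h2, hadj, _⟩ | ⟨hc, h1, hadj, _⟩⟩
  · have hne := hbip _ _ hadj
    constructor
    · intro _ hq
      rw [h2] at hq
      exact hne (hq.trans hc.symm).symm
    · intro _; exact hc
  · have hne := hbip _ _ hadj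
    constructor
    · intro h'; exact absurd h' hc
    · intro hq
      rw [h1] at hq
      exact absurd (key _ _ _ hc (Ne.symm hne)) hq

private lemma pd_no_two_cycle {G : SimpleGraph V} {c : V → Bool}
    (hbip : ∀ x y : V, G.Adj x y → c x ≠ c y) {p q : V × V}
    (h1 : PDArc G c p q) (h2 : PDArc G c q p) : False := by
  have par1 := pd_arc_parity hbip h1
  rcases h1 with ⟨_, _, ⟨hc, hq2, hadj, _⟩ | ⟨hc, hq1, hadj, _⟩⟩ <;>
  rcases h2 with ⟨_, _, ⟨hc', hp2, hadj', _⟩ | ⟨hc', hp1, hadj', _⟩⟩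
  · exact (par1.mp hc) hc'
  · exact G.loopless.irrefl _ (hp1 ▸ hadj)
  · exact G.loopless.irrefl _ (hp2 ▸ hadj)
  · exact hc (par1.mpr hc')

/-- Every non-trivial strongly connected component of H⁺ has at least four vertices. -/
theorem stmt8 (G : SimpleGraph V) (c : V → Bool)
    (hbip : ∀ x y : V, G.Adj x y → c x ≠ c y)
    (S : Set (V × V)) (hS : PDSCCNontriv G c S) :
    ∃ p q r s : V × V, p ∈ S ∧ q ∈ S ∧ r ∈ S ∧ s ∈ S ∧
      p ≠ q ∧ p ≠ r ∧ p ≠ s ∧ q ≠ r ∧ q ≠ s ∧ r ≠ s := by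
  obtain ⟨⟨hne, hmem⟩, p, hp, q, hq, hpq⟩ := hS
  obtain ⟨hpq', hqp'⟩ := (hmem p hp q).mp hq
  obtain ⟨p1, a1, h1q⟩ := (Relation.ReflTransGen.cases_head hpq').resolve_left hpq
  have h1p : PDReach G c p1 p := h1q.trans hqp'
  have hp1p : p1 ≠ p := (pd_arc_ne a1).symm
  obtain ⟨p2, a2, h2p⟩ := (Relation.ReflTransGen.cases_head h1p).resolve_left hp1p
  have hp2p : p2 ≠ p := by
    intro h; subst h; exact pd_no_two_cycle hbip a1 a2
  obtain ⟨p3, a3, h3p⟩ := (Relation.ReflTransGen.cases_head h2p).resolve_left hp2p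
  refine ⟨p, p1, p2, p3, hp, ?_, ?_, ?_, ?_, ?_, ?_, pd_arc_ne a2, ?_, pd_arc_ne a3⟩
  · exact (hmem p hp p1).mpr ⟨Relation.ReflTransGen.single a1, h1p⟩
  · exact (hmem p hp p2).mpr ⟨(Relation.ReflTransGen.single a1).tail a2, h2p⟩
  · exact (hmem p hp p3).mpr ⟨((Relation.ReflTransGen.single a1).tail a2).tail a3, h3p⟩
  · exact pd_arc_ne a1
  · exact hp2p.symm
  · -- p ≠ p3 by parity
    intro h
    have e1 := pd_arc_parity hbip a1
    have e2 := pd_arc_parity hbip a2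
    have e3 := pd_arc_parity hbip a3
    rw [← h] at e3
    tauto
  · -- p1 ≠ p3
    intro h
    subst h
    exact pd_no_two_cycle hbip a2 a3
end

section
/- A pair (a,c) is implied by a non-trivial strongly connected component of H+ (i.e., (a,c) does not lie in a non-trivial component but some vertex of a non-trivial component has an arc to (a,c)) if and only if H contains an induced path a, b, c, d, e on five vertices such that the neighborhood of a is strictly contained in the neighborhood of c. Moreover, in that case the non-trivial component implying (a,c) contains the pairs (a,d), (a,e), (b,d), (b,e). -/
variable {V : Type*}

/-- a, b, x, y, z form an induced path on five distinct vertices. -/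
def InducedPath5 (G : SimpleGraph V) (a b x y z : V) : Prop :=
  a ≠ b ∧ a ≠ x ∧ a ≠ y ∧ a ≠ z ∧ b ≠ x ∧ b ≠ y ∧ b ≠ z ∧ x ≠ y ∧ x ≠ z ∧ y ≠ z ∧
    G.Adj a b ∧ G.Adj b x ∧ G.Adj x y ∧ G.Adj y z ∧
    ¬ G.Adj a x ∧ ¬ G.Adj a y ∧ ¬ G.Adj a z ∧ ¬ G.Adj b y ∧ ¬ G.Adj b z ∧ ¬ G.Adj x z


section Helpers

variable (G : SimpleGraph V) (c : V → Bool)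

private lemma boolEq {p q r : Bool} (h1 : p ≠ r) (h2 : q ≠ r) : p = q := by
  cases p <;> cases q <;> cases r <;> simp_all

private lemma pdarc1 {u v u' : V} (huv : u ≠ v) (hu'v : u' ≠ v) (hc : c u = c v)
    (h1 : G.Adj u u') (h2 : ¬ G.Adj v u') : PDArc G c (u, v) (u', v) :=
  ⟨huv, hu'v, Or.inl ⟨hc, rfl, h1, h2⟩⟩

private lemma pdarc2 {u v v' : V} (huv : u ≠ v) (huv' : u ≠ v') (hc : c u ≠ c v)
    (h1 : G.Adj v v') (h2 : ¬ G.Adj u v) : PDArc G c (u, v) (u, v') :=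
  ⟨huv, huv', Or.inr ⟨hc, rfl, h1, h2⟩⟩

/-- The strongly connected component of `p`. -/
def sccOf (p : V × V) : Set (V × V) := {q | PDReach G c p q ∧ PDReach G c q p}

private lemma mem_sccOf_self (p : V × V) : p ∈ sccOf G c p :=
  ⟨Relation.ReflTransGen.refl, Relation.ReflTransGen.refl⟩

private lemma sccOf_nontriv {p q : V × V} (h1 : PDReach G c p q) (h2 : PDReach G c q p)
    (hne : q ≠ p) : PDSCCNontriv G c (sccOf G c p) := by
  refine ⟨⟨⟨p, mem_sccOf_self G c p⟩, ?_⟩, p, mem_sccOf_self G c p, q, ⟨h1, h2⟩, hne.symm⟩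
  rintro r ⟨hpr, hrp⟩ s
  exact ⟨fun hs => ⟨hrp.trans hs.1, hs.2.trans hpr⟩,
    fun hs => ⟨hpr.trans hs.1, hs.2.trans hrp⟩⟩

private lemma exists_out {S : Set (V × V)} {p : V × V} (hS : PDSCCNontriv G c S)
    (hp : p ∈ S) : ∃ r, PDArc G c p r ∧ PDReach G c r p := by
  obtain ⟨hscc, q1, hq1, q2, hq2, hne⟩ := hS
  have key : ∃ q ∈ S, q ≠ p := by
    by_cases h : q1 = p
    · exact ⟨q2, hq2, fun e => hne (h.trans e.symm)⟩
    · exact ⟨q1, hq1, h⟩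
  obtain ⟨q, hqS, hqp⟩ := key
  have h2 := (hscc.2 p hp q).mp hqS
  rcases Relation.ReflTransGen.cases_head h2.1 with h | ⟨r, hr, hrq⟩
  · exact absurd h.symm hqp
  · exact ⟨r, hr, hrq.trans h2.2⟩

private lemma exists_in {S : Set (V × V)} {p : V × V} (hS : PDSCCNontriv G c S)
    (hp : p ∈ S) : ∃ s, PDArc G c s p := by
  obtain ⟨hscc, q1, hq1, q2, hq2, hne⟩ := hS
  have key : ∃ q ∈ S, q ≠ p := by
    by_cases h : q1 = p
    · exact ⟨q2, hq2, fun e => hne (h.trans e.symm)⟩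
    · exact ⟨q1, hq1, h⟩
  obtain ⟨q, hqS, hqp⟩ := key
  have h2 := (hscc.2 p hp q).mp hqS
  rcases Relation.ReflTransGen.cases_tail h2.2 with h | ⟨s, _, hs⟩
  · exact absurd h.symm hqp
  · exact ⟨s, hs⟩

/-- A pair with no out-arcs lies in no non-trivial component. -/
private lemma sink_lemma {a x : V} (hcax : c a = c x)
    (hsub : ∀ u, G.Adj a u → G.Adj x u)
    (T : Set (V × V)) (hT : PDSCCNontriv G c T) : (a, x) ∉ T := by
  intro hmem
  obtain ⟨r, harc, -⟩ := exists_out G c hT hmem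
  obtain ⟨-, -, h | h⟩ := harc
  · exact h.2.2.2 (hsub _ h.2.2.1)
  · exact h.1 hcax

/-- From an induced P5 we get a non-trivial component implying (a,x). -/
private lemma construct (hbip : ∀ x y : V, G.Adj x y → c x ≠ c y)
    {a b x y z : V} (h5 : InducedPath5 G a b x y z) :
    ∃ S : Set (V × V), PDSCCNontriv G c S ∧ (∃ p ∈ S, PDArc G c p (a, x)) ∧
      (a, y) ∈ S ∧ (a, z) ∈ S ∧ (b, y) ∈ S ∧ (b, z) ∈ S := by
  obtain ⟨hab, hax, hay, haz, hbx, hby, hbz, hxy, hxz, hyz,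
    Aab, Abx, Axy, Ayz, Nax, Nay, Naz, Nby, Nbz, Nxz⟩ := h5
  have cab := hbip a b Aab
  have cbx := hbip b x Abx
  have cxy := hbip x y Axy
  have cyz := hbip y z Ayz
  have cax : c a = c x := boolEq cab (Ne.symm cbx)
  have cby : c b = c y := boolEq cbx (Ne.symm cxy)
  have cxz : c x = c z := boolEq cxy (Ne.symm cyz)
  have caz : c a = c z := cax.trans cxz
  have cay : c a ≠ c y := fun h => cab (h.trans cby.symm)
  have cbz : c b ≠ c z := fun h => cbx (h.trans cxz.symm)
  have A1 : PDArc G c (a, y) (a, z) := pdarc2 G c hay haz cay Ayz Nay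
  have A2 : PDArc G c (a, z) (b, z) := pdarc1 G c haz hbz caz Aab (fun h => Nbz h.symm)
  have A3 : PDArc G c (b, z) (b, y) := pdarc2 G c hbz hby cbz Ayz.symm Nbz
  have A4 : PDArc G c (b, y) (a, y) := pdarc1 G c hby hay cby Aab.symm (fun h => Nay h.symm)
  have A5 : PDArc G c (a, y) (a, x) := pdarc2 G c hay hax cay Axy.symm Nay
  have r1 : PDReach G c (a, y) (a, z) := Relation.ReflTransGen.single A1
  have r2 : PDReach G c (a, z) (a, y) :=
    Relation.ReflTransGen.head A2 (Relation.ReflTransGen.head A3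
      (Relation.ReflTransGen.single A4))
  have hne : ((a, z) : V × V) ≠ (a, y) := fun h => hyz (congrArg Prod.snd h).symm
  refine ⟨sccOf G c (a, y), sccOf_nontriv G c r1 r2 hne, ⟨(a, y), mem_sccOf_self G c _, A5⟩,
    mem_sccOf_self G c _, ⟨r1, r2⟩, ?_, ?_⟩
  · exact ⟨Relation.ReflTransGen.head A1 (Relation.ReflTransGen.head A2
      (Relation.ReflTransGen.single A3)), Relation.ReflTransGen.single A4⟩
  · exact ⟨Relation.ReflTransGen.head A1 (Relation.ReflTransGen.single A2),
      Relation.ReflTransGen.head A3 (Relation.ReflTransGen.single A4)⟩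

end Helpers

/-- (a,x) is implied by a non-trivial component iff H has an induced path
a, b, x, y, z with N(a) ⊊ N(x); and any such path gives a non-trivial component
implying (a,x) and containing (a,y), (a,z), (b,y), (b,z). -/
theorem stmt10 (G : SimpleGraph V) (c : V → Bool)
    (hbip : ∀ x y : V, G.Adj x y → c x ≠ c y)
    (a x : V) :
    ((∃ S : Set (V × V), PDSCCNontriv G c S ∧
        (∀ T : Set (V × V), PDSCCNontriv G c T → (a, x) ∉ T) ∧
        ∃ p ∈ S, PDArc G c p (a, x)) ↔
      (∃ b y z : V, InducedPath5 G a b x y z ∧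
        G.neighborSet a ⊂ G.neighborSet x)) ∧
    (∀ b y z : V, InducedPath5 G a b x y z → G.neighborSet a ⊂ G.neighborSet x →
      ∃ S : Set (V × V), PDSCCNontriv G c S ∧ (∃ p ∈ S, PDArc G c p (a, x)) ∧
        (a, y) ∈ S ∧ (a, z) ∈ S ∧ (b, y) ∈ S ∧ (b, z) ∈ S) := by
  constructor
  · constructor
    · -- forward direction
      rintro ⟨S, hSnt, hnoT, p, hpS, harc⟩
      obtain ⟨p1, p2⟩ := p
      obtain ⟨hp12, hax, hcase⟩ := harc
      replace hax : a ≠ x := hax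
      rcases hcase with ⟨hc, hq2, hadj, hnadj⟩ | ⟨hc, hq1, hadj, hnadj⟩
      · -- Case A: impossible
        replace hq2 : x = p2 := hq2
        subst hq2
        replace hc : c p1 = c x := hc
        replace hadj : G.Adj p1 a := hadj
        replace hnadj : ¬ G.Adj x a := hnadj
        replace hp12 : p1 ≠ x := hp12
        have cwa : c p1 ≠ c a := hbip p1 a hadj
        have cax' : c a ≠ c x := fun h => cwa (hc.trans h.symm)
        have hnax : ¬ G.Adj a x := fun h => hnadj h.symm
        obtain ⟨s, harcin⟩ := exists_in G c hSnt hpS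
        obtain ⟨s1, s2⟩ := s
        obtain ⟨hs12, -, hin⟩ := harcin
        rcases hin with ⟨hc', hq2', hadj', hnadj'⟩ | ⟨hc', hq1', hadj', hnadj'⟩
        · -- type-1 in-arc: color contradiction
          replace hq2' : x = s2 := hq2'
          subst hq2'
          replace hadj' : G.Adj s1 p1 := hadj'
          exact absurd ((hc' : c s1 = c x).trans hc.symm) (hbip s1 p1 hadj')
        · -- type-2 in-arc gives t := s2 ∈ N(x) \\ N(p1); build the 4-cycle
          replace hq1' : p1 = s1 := hq1'
          subst hq1'
          replace hc' : c p1 ≠ c s2 := hc'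
          replace hadj' : G.Adj s2 x := hadj'
          replace hnadj' : ¬ G.Adj p1 s2 := hnadj'
          have hat : a ≠ s2 := by intro h; subst h; exact hnax hadj'
          have cta : c s2 = c a := boolEq (Ne.symm hc') (Ne.symm cwa)
          have hwt : p1 ≠ s2 := fun h => hc' (congrArg c h)
          have C1 : PDArc G c (a, x) (a, s2) := pdarc2 G c hax hat cax' hadj'.symm hnax
          have C2 : PDArc G c (a, s2) (p1, s2) :=
            pdarc1 G c hat hwt cta.symm hadj.symm (fun h => hnadj' h.symm)
          have C3 : PDArc G c (p1, s2) (p1, x) := pdarc2 G c hwt hp12 hc' hadj' hnadj'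
          have C4 : PDArc G c (p1, x) (a, x) := pdarc1 G c hp12 hax hc hadj hnadj
          have r1 : PDReach G c (a, x) (a, s2) := Relation.ReflTransGen.single C1
          have r2 : PDReach G c (a, s2) (a, x) :=
            Relation.ReflTransGen.head C2 (Relation.ReflTransGen.head C3
              (Relation.ReflTransGen.single C4))
          have hne : ((a, s2) : V × V) ≠ (a, x) := by
            intro h
            have h2 : s2 = x := congrArg Prod.snd h
            exact cax' (cta.symm.trans (congrArg c h2))
          exact absurd (mem_sccOf_self G c (a, x)) (hnoT _ (sccOf_nontriv G c r1 r2 hne))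
      · -- Case B
        replace hq1 : a = p1 := hq1
        subst hq1
        replace hc : c a ≠ c p2 := hc
        replace hadj : G.Adj p2 x := hadj
        replace hnadj : ¬ G.Adj a p2 := hnadj
        replace hp12 : a ≠ p2 := hp12
        have cax : c a = c x := boolEq hc (Ne.symm (hbip p2 x hadj))
        have hnax : ¬ G.Adj a x := fun h => hbip a x h cax
        -- N(a) ⊆ N(x)
        have hsub : ∀ u, G.Adj a u → G.Adj x u := by
          intro b' hb'
          by_contra hxb'
          have hab' : a ≠ b' := G.ne_of_adj hb'
          have hb'x : b' ≠ x := by intro h; rw [h] at hb'; exact hnax hb'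
          have hb'v : b' ≠ p2 := by intro h; rw [h] at hb'; exact hnadj hb'
          have cb'x : c b' ≠ c x := fun h => hbip a b' hb' (cax.trans h.symm)
          have cb'v : c b' = c p2 := boolEq (Ne.symm (hbip a b' hb')) (Ne.symm hc)
          have D1 : PDArc G c (a, x) (b', x) := pdarc1 G c hax hb'x cax hb' hxb'
          have D2 : PDArc G c (b', x) (b', p2) :=
            pdarc2 G c hb'x hb'v cb'x hadj.symm (fun h => hxb' h.symm)
          have D3 : PDArc G c (b', p2) (a, p2) :=
            pdarc1 G c hb'v hp12 cb'v hb'.symm (fun h => hnadj h.symm)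
          have D4 : PDArc G c (a, p2) (a, x) := pdarc2 G c hp12 hax hc hadj hnadj
          have r1 : PDReach G c (a, x) (b', x) := Relation.ReflTransGen.single D1
          have r2 : PDReach G c (b', x) (a, x) :=
            Relation.ReflTransGen.head D2 (Relation.ReflTransGen.head D3
              (Relation.ReflTransGen.single D4))
          have hne : ((b', x) : V × V) ≠ (a, x) := fun h => hab' (congrArg Prod.fst h).symm
          exact absurd (mem_sccOf_self G c (a, x)) (hnoT _ (sccOf_nontriv G c r1 r2 hne))
        -- extract two steps of the closed walk at (a, p2)
        obtain ⟨r, harcr, hreachr⟩ := exists_out G c hSnt hpS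
        obtain ⟨r1, r2⟩ := r
        obtain ⟨-, -, hrc⟩ := harcr
        rcases hrc with ⟨hc1, -, -, -⟩ | ⟨-, hq1r, hadjr, -⟩
        · exact absurd (hc1 : c a = c p2) hc
        · replace hq1r : a = r1 := (hq1r : r1 = a).symm
          subst hq1r
          replace hadjr : G.Adj p2 r2 := hadjr
          have cr2a : c r2 = c a := boolEq (Ne.symm (hbip p2 r2 hadjr)) hc
          have hrne : ((a, r2) : V × V) ≠ (a, p2) :=
            fun h => G.ne_of_adj hadjr (congrArg Prod.snd h).symm
          rcases Relation.ReflTransGen.cases_head hreachr with heq | ⟨r3, harc2, -⟩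
          · exact absurd heq hrne
          · obtain ⟨w1, w2⟩ := r3
            obtain ⟨-, -, hcc⟩ := harc2
            rcases hcc with ⟨-, hq2c, hadjc, hnadjc⟩ | ⟨hcc', -, -, -⟩
            · replace hq2c : r2 = w2 := (hq2c : w2 = r2).symm
              subst hq2c
              replace hadjc : G.Adj a w1 := hadjc
              replace hnadjc : ¬ G.Adj r2 w1 := hnadjc
              have cw1 : c a ≠ c w1 := hbip a w1 hadjc
              have cw1v : c w1 = c p2 := boolEq (Ne.symm cw1) (Ne.symm hc)
              have hxw1 : G.Adj x w1 := hsub w1 hadjc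
              refine ⟨w1, p2, r2, ⟨G.ne_of_adj hadjc, hax, hp12, ?_, (G.ne_of_adj hxw1).symm,
                ?_, ?_, ?_, ?_, G.ne_of_adj hadjr, hadjc, hxw1.symm, hadj.symm, hadjr,
                hnax, hnadj, ?_, ?_, fun h => hnadjc h.symm, ?_⟩, ?_⟩
              · intro h; rw [h] at hadjc; exact hnadjc hadjc
              · intro h; rw [h] at hadjc; exact hnadj hadjc
              · intro h
                exact hc (cr2a.symm.trans ((congrArg c h).symm.trans cw1v))
              · exact fun h => hc (cax.trans (congrArg c h))
              · intro h; rw [h] at hxw1; exact hnadjc hxw1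
              · exact fun h => hbip a r2 h cr2a.symm
              · exact fun h => hbip w1 p2 h cw1v
              · exact fun h => hbip x r2 h (cax.symm.trans cr2a.symm)
              · rw [Set.ssubset_def]
                exact ⟨fun u hu => hsub u hu, fun h => hnadj (h hadj.symm)⟩
            · exact absurd (cr2a.symm : c a = c r2) hcc'
    · -- backward direction
      rintro ⟨b, y, z, h5, hss⟩
      obtain ⟨S, hSnt, hparc, -, -, -, -⟩ := construct G c hbip h5
      refine ⟨S, hSnt, ?_, hparc⟩
      have cab := hbip a b h5.2.2.2.2.2.2.2.2.2.2.1
      have cbx := hbip b x h5.2.2.2.2.2.2.2.2.2.2.2.1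
      have cax : c a = c x := boolEq cab (Ne.symm cbx)
      exact sink_lemma G c cax (fun u hu => hss.subset hu)
  · intro b y z h5 _
    exact construct G c hbip h5
end

section
/- If there is an arc in H+ from a vertex of a non-trivial strongly connected component S to a vertex w not in S, then w has out-degree zero in H+; if there is an arc from a vertex w not in S to a vertex of S, then w has in-degree zero in H+. -/
variable {V : Type*}

private lemma bool_eq_of_ne_ne {a b d : Bool} (h1 : a ≠ d) (h2 : b ≠ d) : a = b := by
  cases a <;> cases b <;> cases d <;> simp_all

private lemma arcA {G : SimpleGraph V} {c : V → Bool} {u v u' : V}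
    (h0 : u ≠ v) (h1 : u' ≠ v) (hc : c u = c v)
    (ha : G.Adj u u') (hn : ¬ G.Adj v u') : PDArc G c (u, v) (u', v) :=
  ⟨h0, h1, Or.inl ⟨hc, rfl, ha, hn⟩⟩

private lemma arcB {G : SimpleGraph V} {c : V → Bool} {u v v' : V}
    (h0 : u ≠ v) (h1 : u ≠ v') (hc : c u ≠ c v)
    (ha : G.Adj v v') (hn : ¬ G.Adj u v) : PDArc G c (u, v) (u, v') :=
  ⟨h0, h1, Or.inr ⟨hc, rfl, ha, hn⟩⟩

/-- An arc leaving a non-trivial component S goes to a sink of H⁺, and an arc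
entering S comes from a source of H⁺. -/
theorem stmt11 (G : SimpleGraph V) (c : V → Bool)
    (hbip : ∀ x y : V, G.Adj x y → c x ≠ c y)
    (S : Set (V × V)) (hS : PDSCCNontriv G c S)
    (w : V × V) (hw : w ∉ S) :
    ((∃ p ∈ S, PDArc G c p w) → ∀ q : V × V, ¬ PDArc G c w q) ∧
    ((∃ p ∈ S, PDArc G c w p) → ∀ q : V × V, ¬ PDArc G c q w) := by
  obtain ⟨hSCC, a, haS, b, hbS, hab⟩ := hS
  obtain ⟨w1, w2⟩ := w
  constructor
  · rintro ⟨p, hpS, hpw⟩ q hwq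
    obtain ⟨u, v⟩ := p
    have hpw' := hpw
    obtain ⟨huv, hwne, hc | hc⟩ := hpw'
    · -- type A arc out of p : p = (u,v) same colors, w = (w1, v)
      obtain ⟨hcuv, hw2, hadj, hnadj⟩ := hc
      have hcuv : c u = c v := hcuv
      have hw2' : v = w2 := hw2.symm
      subst hw2'
      have hadj : G.Adj u w1 := hadj
      have hnadj : ¬ G.Adj v w1 := hnadj
      -- find an in-arc to p inside S
      have hs : ∃ s ∈ S, s ≠ (u, v) := by
        by_cases h : a = (u, v)
        · exact ⟨b, hbS, by rintro rfl; exact hab h⟩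
        · exact ⟨a, haS, h⟩
      obtain ⟨s, hsS, hsne⟩ := hs
      have hsp := ((hSCC.2 _ hpS s).mp hsS).2
      obtain ⟨r, hsr, hrp⟩ : ∃ r, PDReach G c s r ∧ PDArc G c r (u, v) := by
        rcases Relation.ReflTransGen.cases_tail hsp with h | h
        · exact absurd h.symm hsne
        · exact h
      obtain ⟨r1, r2⟩ := r
      have hrp' := hrp
      obtain ⟨hrne, -, hc2 | hc2⟩ := hrp'
      · -- impossible: target has equal colors
        have h1 : G.Adj r1 u := hc2.2.2.1
        have h2 : c r1 = c r2 := hc2.1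
        have h3 : v = r2 := hc2.2.1
        exact absurd (h2.trans (h3 ▸ hcuv.symm)).symm (hbip r1 u h1).symm
      · obtain ⟨hcr, hr1, hadj2, hnadj2⟩ := hc2
        have hr1' : u = r1 := hr1
        subst hr1'
        have hcuv0 : c u ≠ c r2 := hcr
        have hadj2 : G.Adj r2 v := hadj2
        have hnadj2 : ¬ G.Adj u r2 := hnadj2
        have hcw1 : c w1 ≠ c u := (hbip u w1 hadj).symm
        have hcw1v : c w1 ≠ c v := hcuv ▸ hcw1
        have hw1v : w1 ≠ v := fun h => hcw1v (h ▸ rfl)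
        have hcw1r2 : c w1 = c r2 := bool_eq_of_ne_ne hcw1 (Ne.symm hcuv0)
        have hw1r2 : w1 ≠ r2 := fun h => hnadj (by rw [h]; exact hadj2.symm)
        have hur2 : u ≠ r2 := fun h => hcuv0 (h ▸ rfl)
        have a1 : PDArc G c (w1, v) (w1, r2) :=
          arcB hw1v hw1r2 hcw1v hadj2.symm (fun h => hnadj h.symm)
        have a2 : PDArc G c (w1, r2) (u, r2) :=
          arcA hw1r2 hur2 hcw1r2 hadj.symm (fun h => hnadj2 h.symm)
        have reachwp : PDReach G c (w1, v) (u, v) :=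
          Relation.ReflTransGen.head a1
            (Relation.ReflTransGen.head a2 (Relation.ReflTransGen.single hrp))
        exact hw ((hSCC.2 _ hpS _).mpr ⟨Relation.ReflTransGen.single hpw, reachwp⟩)
    · -- type B arc out of p : p = (u,v) diff colors, w = (u, w2)
      obtain ⟨hcuv, hw1, hadj, hnadj⟩ := hc
      have hcuv : c u ≠ c v := hcuv
      have hw1' : u = w1 := hw1.symm
      subst hw1'
      have hadj : G.Adj v w2 := hadj
      have hnadj : ¬ G.Adj u v := hnadj
      obtain ⟨q1, q2⟩ := q
      have hwq' := hwq
      obtain ⟨hwne', hqne, hc2 | hc2⟩ := hwq'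
      · -- type A arc out of w
        obtain ⟨hcw, hq2, hadjq, hnadjq⟩ := hc2
        have hq2' : w2 = q2 := hq2.symm
        subst hq2'
        have hadjq : G.Adj u q1 := hadjq
        have hnadjq : ¬ G.Adj w2 q1 := hnadjq
        have hcq1 : c q1 ≠ c u := (hbip u q1 hadjq).symm
        have hcq1v : c q1 = c v := bool_eq_of_ne_ne hcq1 (Ne.symm hcuv)
        have hq1v : q1 ≠ v := fun h => hnadj (h ▸ hadjq)
        have hcw2 : c u = c w2 := hcw
        have hq1w2 : q1 ≠ w2 := fun h => hcq1 (hcw2 ▸ h ▸ rfl)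
        have a2 : PDArc G c (q1, w2) (q1, v) :=
          arcB hq1w2 hq1v (hcw2 ▸ hcq1) hadj.symm (fun h => hnadjq h.symm)
        have a3 : PDArc G c (q1, v) (u, v) :=
          arcA hq1v huv hcq1v hadjq.symm (fun h => hnadj h.symm)
        have reachwp : PDReach G c (u, w2) (u, v) :=
          Relation.ReflTransGen.head hwq
            (Relation.ReflTransGen.head a2 (Relation.ReflTransGen.single a3))
        exact hw ((hSCC.2 _ hpS _).mpr ⟨Relation.ReflTransGen.single hpw, reachwp⟩)
      · -- impossible: w has equal colors
        have h1 : c u ≠ c w2 := hc2.1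
        have h2 : c w2 ≠ c v := (hbip v w2 hadj).symm
        exact h1 (bool_eq_of_ne_ne hcuv h2)
  · rintro ⟨p, hpS, hwp⟩ q hqw
    obtain ⟨p1, p2⟩ := p
    have hwp' := hwp
    obtain ⟨hwne, hpne, hc | hc⟩ := hwp'
    · -- type A arc w → p : w = (w1,w2) same colors, p = (p1, w2)
      obtain ⟨hcw, hp2, hadj, hnadj⟩ := hc
      have hcw : c w1 = c w2 := hcw
      have hp2' : w2 = p2 := hp2.symm
      subst hp2'
      have hadj : G.Adj w1 p1 := hadj
      have hnadj : ¬ G.Adj w2 p1 := hnadj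
      obtain ⟨q1, q2⟩ := q
      have hqw' := hqw
      obtain ⟨hqne, hwne', hc2 | hc2⟩ := hqw'
      · -- impossible: w has equal colors but would be type A target
        have h1 : G.Adj q1 w1 := hc2.2.2.1
        have h2 : c q1 = c q2 := hc2.1
        have h3 : w2 = q2 := hc2.2.1
        exact absurd (h2.trans (h3 ▸ hcw.symm)).symm (hbip q1 w1 h1).symm
      · obtain ⟨hcq, hq1, hadj2, hnadj2⟩ := hc2
        have hq1' : w1 = q1 := hq1
        subst hq1'
        have hcq : c w1 ≠ c q2 := hcq
        have hadj2 : G.Adj q2 w2 := hadj2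
        have hnadj2 : ¬ G.Adj w1 q2 := hnadj2
        have hcp1 : c p1 ≠ c w1 := (hbip w1 p1 hadj).symm
        have hcp1w2 : c p1 ≠ c w2 := hcw ▸ hcp1
        have hp1w2 : p1 ≠ w2 := fun h => hcp1w2 (h ▸ rfl)
        have hcp1q2 : c p1 = c q2 := bool_eq_of_ne_ne hcp1 (Ne.symm hcq)
        have hp1q2 : p1 ≠ q2 := fun h => hnadj (by rw [h]; exact hadj2.symm)
        have hw1q2 : w1 ≠ q2 := fun h => hcq (h ▸ rfl)
        have a1 : PDArc G c (p1, w2) (p1, q2) :=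
          arcB hp1w2 hp1q2 hcp1w2 hadj2.symm (fun h => hnadj h.symm)
        have a2 : PDArc G c (p1, q2) (w1, q2) :=
          arcA hp1q2 hw1q2 hcp1q2 hadj.symm (fun h => hnadj2 h.symm)
        have reachpw : PDReach G c (p1, w2) (w1, w2) :=
          Relation.ReflTransGen.head a1
            (Relation.ReflTransGen.head a2 (Relation.ReflTransGen.single hqw))
        exact hw ((hSCC.2 _ hpS _).mpr ⟨reachpw, Relation.ReflTransGen.single hwp⟩)
    · -- type B arc w → p : w = (w1,w2) diff colors, p = (w1, p2)
      obtain ⟨hcw, hp1, hadj, hnadj⟩ := hc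
      have hcw : c w1 ≠ c w2 := hcw
      have hp1' : w1 = p1 := hp1.symm
      subst hp1'
      have hadj : G.Adj w2 p2 := hadj
      have hnadj : ¬ G.Adj w1 w2 := hnadj
      have hcp2 : c p2 ≠ c w2 := (hbip w2 p2 hadj).symm
      have hcwp2 : c w1 = c p2 := bool_eq_of_ne_ne hcw hcp2
      -- find an out-arc from p inside S
      have hs : ∃ s ∈ S, s ≠ (w1, p2) := by
        by_cases h : a = (w1, p2)
        · exact ⟨b, hbS, by rintro rfl; exact hab h⟩
        · exact ⟨a, haS, h⟩
      obtain ⟨s, hsS, hsne⟩ := hs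
      have hps := ((hSCC.2 _ hpS s).mp hsS).1
      obtain ⟨r, hpr, hrs⟩ : ∃ r, PDArc G c (w1, p2) r ∧ PDReach G c r s := by
        rcases Relation.ReflTransGen.cases_head hps with h | h
        · exact absurd h.symm hsne
        · exact h
      obtain ⟨r1, r2⟩ := r
      have hpr' := hpr
      obtain ⟨-, hrne, hc2 | hc2⟩ := hpr'
      · obtain ⟨-, hr2, hadj2, hnadj2⟩ := hc2
        have hr2' : p2 = r2 := hr2.symm
        subst hr2'
        have hadj2 : G.Adj w1 r1 := hadj2
        have hnadj2 : ¬ G.Adj p2 r1 := hnadj2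
        have hcr1 : c r1 ≠ c w1 := (hbip w1 r1 hadj2).symm
        have hcr1p2 : c r1 ≠ c p2 := hcwp2 ▸ hcr1
        have hr1p2 : r1 ≠ p2 := fun h => hcr1p2 (h ▸ rfl)
        have hcr1w2 : c r1 = c w2 := bool_eq_of_ne_ne hcr1 (Ne.symm hcw)
        have hr1w2 : r1 ≠ w2 := fun h => hnadj (h ▸ hadj2)
        have a2 : PDArc G c (r1, p2) (r1, w2) :=
          arcB hr1p2 hr1w2 hcr1p2 hadj.symm (fun h => hnadj2 h.symm)
        have a3 : PDArc G c (r1, w2) (w1, w2) :=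
          arcA hr1w2 hwne hcr1w2 hadj2.symm (fun h => hnadj h.symm)
        have reachpw : PDReach G c (w1, p2) (w1, w2) :=
          Relation.ReflTransGen.head hpr
            (Relation.ReflTransGen.head a2 (Relation.ReflTransGen.single a3))
        exact hw ((hSCC.2 _ hpS _).mpr ⟨reachpw, Relation.ReflTransGen.single hwp⟩)
      · -- impossible: p has equal colors
        exact hc2.1 hcwp2
end

section
/- Every directed path in the condensation of the pair-digraph H+ has at most three vertices. Equivalently, H+ contains no directed path visiting four pairwise distinct strongly connected components. -/
variable {V : Type*}

section Aux
variable {V : Type*}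

private lemma bool3 {x y z : Bool} (h1 : x ≠ z) (h2 : y ≠ z) : x = y := by
  revert h1 h2; cases x <;> cases y <;> cases z <;> decide

lemma scc_eq_of_mem_mem {G : SimpleGraph V} {c : V → Bool} {S T : Set (V × V)}
    (hS : PDSCC G c S) (hT : PDSCC G c T) {p : V × V} (hpS : p ∈ S) (hpT : p ∈ T) :
    S = T := by
  ext q
  rw [hS.2 p hpS q, hT.2 p hpT q]

lemma decomp {α : Type*} {r : α → α → Prop} {p q : α}
    (h : Relation.ReflTransGen r p q) :
    Relation.ReflTransGen r q p ∨
      ∃ a b, Relation.ReflTransGen r p a ∧ r a b ∧ Relation.ReflTransGen r b q ∧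
        ¬ Relation.ReflTransGen r b a := by
  induction h with
  | refl => exact Or.inl .refl
  | @tail a b hpa hab ih =>
    rcases ih with hap | ⟨x, y, hpx, hxy, hya, hnyx⟩
    · by_cases hba : Relation.ReflTransGen r b a
      · exact Or.inl (hba.trans hap)
      · exact Or.inr ⟨a, b, hpa, hab, .refl, hba⟩
    · exact Or.inr ⟨x, y, hpx, hxy, hya.tail hab, hnyx⟩

lemma reach_back_type1 {G : SimpleGraph V} {c : V → Bool}
    (hbip : ∀ x y : V, G.Adj x y → c x ≠ c y)
    {u v u' w : V} (huv : u ≠ v) (hu'v : u' ≠ v) (hc : c u = c v)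
    (ha : G.Adj u u') (hna : ¬ G.Adj v u')
    (hw : G.Adj v w) (hnw : ¬ G.Adj u w) :
    PDReach G c (u', v) (u, v) := by
  have hcu' : c u ≠ c u' := hbip u u' ha
  have hcw : c v ≠ c w := hbip v w hw
  have hu'w : u' ≠ w := fun h => hna (h ▸ hw)
  have huw : u ≠ w := fun h => hcw (h ▸ hc.symm)
  have hcwu : c w ≠ c u := fun h => hcw ((hc.symm).trans h.symm)
  have step1 : PDArc G c (u', v) (u', w) :=
    ⟨hu'v, hu'w, Or.inr ⟨fun h => hcu' (hc.trans h.symm), rfl, hw, fun h => hna h.symm⟩⟩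
  have step2 : PDArc G c (u', w) (u, w) :=
    ⟨hu'w, huw, Or.inl ⟨bool3 (Ne.symm hcu') hcwu, rfl, ha.symm, fun h => hnw h.symm⟩⟩
  have step3 : PDArc G c (u, w) (u, v) :=
    ⟨huw, huv, Or.inr ⟨Ne.symm hcwu, rfl, hw.symm, hnw⟩⟩
  exact Relation.ReflTransGen.head step1
    (Relation.ReflTransGen.head step2 (Relation.ReflTransGen.single step3))

lemma reach_back_type2 {G : SimpleGraph V} {c : V → Bool}
    (hbip : ∀ x y : V, G.Adj x y → c x ≠ c y)
    {u v v' z : V} (huv : u ≠ v) (huv' : u ≠ v') (hcuv : c u ≠ c v)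
    (hv : G.Adj v v') (hnuv : ¬ G.Adj u v)
    (hz : G.Adj u z) (hnz : ¬ G.Adj v' z) :
    PDReach G c (u, v') (u, v) := by
  have hcv' : c v ≠ c v' := hbip v v' hv
  have hcz : c u ≠ c z := hbip u z hz
  have hcuv'' : c u = c v' := bool3 hcuv (Ne.symm hcv')
  have hzv' : z ≠ v' := fun h => hcz (h ▸ hcuv'')
  have hzv : z ≠ v := fun h => hnuv (h ▸ hz)
  have step1 : PDArc G c (u, v') (z, v') :=
    ⟨huv', hzv', Or.inl ⟨hcuv'', rfl, hz, hnz⟩⟩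
  have step2 : PDArc G c (z, v') (z, v) :=
    ⟨hzv', hzv, Or.inr ⟨fun h => hcz (hcuv''.trans h.symm), rfl, hv.symm, fun h => hnz h.symm⟩⟩
  have step3 : PDArc G c (z, v) (u, v) :=
    ⟨hzv, huv, Or.inl ⟨bool3 (Ne.symm hcz) (Ne.symm hcuv), rfl, hz.symm, fun h => hnuv h.symm⟩⟩
  exact Relation.ReflTransGen.head step1
    (Relation.ReflTransGen.head step2 (Relation.ReflTransGen.single step3))

end Aux

/-- H⁺ contains no directed path visiting four pairwise distinct strongly
connected components: every directed path in the condensation has at most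
three vertices. -/
theorem stmt12 (G : SimpleGraph V) (c : V → Bool)
    (hbip : ∀ x y : V, G.Adj x y → c x ≠ c y)
    (S1 S2 S3 S4 : Set (V × V))
    (h1 : PDSCC G c S1) (h2 : PDSCC G c S2) (h3 : PDSCC G c S3) (h4 : PDSCC G c S4)
    (p1 p2 p3 p4 : V × V)
    (hp1 : p1 ∈ S1) (hp2 : p2 ∈ S2) (hp3 : p3 ∈ S3) (hp4 : p4 ∈ S4)
    (h12 : PDReach G c p1 p2) (h23 : PDReach G c p2 p3) (h34 : PDReach G c p3 p4) :
    S1 = S2 ∨ S1 = S3 ∨ S1 = S4 ∨ S2 = S3 ∨ S2 = S4 ∨ S3 = S4 := by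
  by_contra hcon
  push_neg at hcon
  obtain ⟨h12', h13', h14', h23', h24', h34'⟩ := hcon
  have key : ∀ {S T : Set (V × V)} {p q : V × V}, PDSCC G c S → PDSCC G c T →
      p ∈ S → q ∈ T → PDReach G c p q → PDReach G c q p → S = T := by
    intro S T p q hS hT hpS hqT hpq hqp
    exact scc_eq_of_mem_mem hS hT ((hS.2 p hpS q).2 ⟨hpq, hqp⟩) hqT
  have hn32 : ¬ PDReach G c p3 p2 := fun h => h23' (key h2 h3 hp2 hp3 h23 h)
  rcases decomp h23 with h | ⟨a, b, h2a, hab, hb3, hnba⟩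
  · exact absurd h hn32
  obtain ⟨u, v⟩ := a
  obtain ⟨x, y⟩ := b
  obtain ⟨huv, hxy, hcase⟩ := hab
  dsimp only at huv hxy hcase
  rcases hcase with ⟨hc, h2eq, hadj, hnadj⟩ | ⟨hc, h1eq, hadj, hnadj⟩
  · -- type-1 arc (u,v) → (x,v); tail is a source, contradiction with p1 before it
    subst h2eq
    have hdom : ∀ w, G.Adj y w → G.Adj u w := by
      intro w hw
      by_contra hnw
      exact hnba (reach_back_type1 hbip huv hxy hc hadj hnadj hw hnw)
    have hap1 : (u, y) ≠ p1 := by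
      rintro rfl
      exact h12' (key h1 h2 hp1 hp2 h12 h2a)
    have h1a : Relation.ReflTransGen (PDArc G c) p1 (u, y) := h12.trans h2a
    rcases h1a.cases_tail with heq | ⟨q, _, hqa⟩
    · exact hap1 heq
    · obtain ⟨hq1, _, hcase2⟩ := hqa
      dsimp only at hcase2
      rcases hcase2 with ⟨hc2, he2, had2, hna2⟩ | ⟨hc2, he2, had2, hna2⟩
      · exact hbip q.1 u had2 (by rw [hc2, ← he2, ← hc])
      · exact hna2 (by rw [← he2]; exact hdom q.2 had2.symm)
  · -- type-2 arc (u,v) → (u,y); head is a sink, contradiction with p4 after it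
    subst h1eq
    have hdom : ∀ z, G.Adj x z → G.Adj y z := by
      intro z hz
      by_contra hnz
      exact hnba (reach_back_type2 hbip huv hxy hc hadj hnadj hz hnz)
    have hbp4 : (x, y) ≠ p4 := by
      rintro rfl
      exact h34' (key h3 h4 hp3 hp4 h34 hb3)
    have hb4 : Relation.ReflTransGen (PDArc G c) (x, y) p4 := hb3.trans h34
    rcases hb4.cases_head with heq | ⟨q, hbq, _⟩
    · exact hbp4 heq
    · obtain ⟨_, _, hcase2⟩ := hbq
      dsimp only at hcase2
      rcases hcase2 with ⟨hc2, _, had2, hna2⟩ | ⟨hc2, _, _, _⟩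
      · exact hna2 (hdom q.1 had2)
      · exact hc2 (bool3 hc (Ne.symm (hbip v y hadj)))
end

section
/- If a bipartite graph H contains an exobiclique, then H is not an interval bigraph. -/
variable {V : Type*}

/-- H (with bipartition given by `c`) is an interval bigraph: there are real
intervals, one per vertex, such that vertices of different colors are adjacent
iff their intervals intersect. -/
def IsIntervalBigraph (G : SimpleGraph V) (c : V → Bool) : Prop :=
  ∃ l r : V → ℝ, ∀ x y : V, c x ≠ c y →
    (G.Adj x y ↔ ∃ t : ℝ, t ∈ Set.Icc (l x) (r x) ∧ t ∈ Set.Icc (l y) (r y))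

/-- x and y have incomparable neighborhoods inside N. -/
def NbhdIncomp (G : SimpleGraph V) (N : Set V) (x y : V) : Prop :=
  ¬ (N ∩ G.neighborSet x ⊆ N ∩ G.neighborSet y) ∧
  ¬ (N ∩ G.neighborSet y ⊆ N ∩ G.neighborSet x)

/-- H contains an exobiclique: a biclique with parts M, N, three vertices of the
first color class outside M with pairwise incomparable neighborhoods in N, and
three vertices of the second color class outside N with pairwise incomparable
neighborhoods in M. -/
def HasExobiclique (G : SimpleGraph V) (c : V → Bool) : Prop :=
  ∃ M N : Set V, M.Nonempty ∧ N.Nonempty ∧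
    (∀ v ∈ M, c v = true) ∧ (∀ v ∈ N, c v = false) ∧
    (∀ m ∈ M, ∀ n ∈ N, G.Adj m n) ∧
    (∃ b1 b2 b3 : V, b1 ≠ b2 ∧ b1 ≠ b3 ∧ b2 ≠ b3 ∧
      c b1 = true ∧ c b2 = true ∧ c b3 = true ∧
      b1 ∉ M ∧ b2 ∉ M ∧ b3 ∉ M ∧
      NbhdIncomp G N b1 b2 ∧ NbhdIncomp G N b1 b3 ∧ NbhdIncomp G N b2 b3) ∧
    (∃ w1 w2 w3 : V, w1 ≠ w2 ∧ w1 ≠ w3 ∧ w2 ≠ w3 ∧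
      c w1 = false ∧ c w2 = false ∧ c w3 = false ∧
      w1 ∉ N ∧ w2 ∉ N ∧ w3 ∉ N ∧
      NbhdIncomp G M w1 w2 ∧ NbhdIncomp G M w1 w3 ∧ NbhdIncomp G M w2 w3)

private lemma twoLeft (G : SimpleGraph V) (c : V → Bool) (l r : V → ℝ)
    (hlr : ∀ x y : V, c x ≠ c y →
      (G.Adj x y ↔ ∃ t : ℝ, t ∈ Set.Icc (l x) (r x) ∧ t ∈ Set.Icc (l y) (r y)))
    (N : Set V) (p : ℝ) (hN : ∀ n ∈ N, l n ≤ p ∧ p ≤ r n)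
    (bi bj : V) (hci : ∀ n ∈ N, c bi ≠ c n) (hcj : ∀ n ∈ N, c bj ≠ c n)
    (hj : r bj < p) (hij : r bi ≤ r bj)
    (hinc : NbhdIncomp G N bi bj) : False := by
  obtain ⟨h1, h2⟩ := hinc
  rw [Set.not_subset] at h1 h2
  obtain ⟨n, hn1, hn2⟩ := h1
  obtain ⟨n', hn'1, -⟩ := h2
  simp only [Set.mem_inter_iff, SimpleGraph.mem_neighborSet, not_and] at hn1 hn2 hn'1
  obtain ⟨hnN, hni⟩ := hn1
  obtain ⟨hn'N, hn'j⟩ := hn'1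
  have hnbj : ¬ G.Adj bj n := hn2 hnN
  obtain ⟨t, hti, htn⟩ := (hlr bi n (hci n hnN)).mp hni
  obtain ⟨t', ht'j, -⟩ := (hlr bj n' (hcj n' hn'N)).mp hn'j
  simp only [Set.mem_Icc] at hti htn ht'j
  apply hnbj
  rw [hlr bj n (hcj n hnN)]
  refine ⟨r bj, ?_, ?_⟩ <;> simp only [Set.mem_Icc]
  · exact ⟨le_trans ht'j.1 ht'j.2, le_refl _⟩
  · exact ⟨le_trans htn.1 (le_trans hti.2 hij), by linarith [(hN n hnN).2]⟩

private lemma noThree (G : SimpleGraph V) (c : V → Bool) (l r : V → ℝ)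
    (hlr : ∀ x y : V, c x ≠ c y →
      (G.Adj x y ↔ ∃ t : ℝ, t ∈ Set.Icc (l x) (r x) ∧ t ∈ Set.Icc (l y) (r y)))
    (N : Set V) (p : ℝ) (hN : ∀ n ∈ N, l n ≤ p ∧ p ≤ r n)
    (b1 b2 b3 : V)
    (hc1 : ∀ n ∈ N, c b1 ≠ c n) (hc2 : ∀ n ∈ N, c b2 ≠ c n)
    (hc3 : ∀ n ∈ N, c b3 ≠ c n)
    (h12 : NbhdIncomp G N b1 b2) (h13 : NbhdIncomp G N b1 b3)
    (h23 : NbhdIncomp G N b2 b3) : False := by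
  -- the reflected interval system
  have hlr' : ∀ x y : V, c x ≠ c y →
      (G.Adj x y ↔ ∃ t : ℝ, t ∈ Set.Icc (-(r x)) (-(l x)) ∧
        t ∈ Set.Icc (-(r y)) (-(l y))) := by
    intro x y hxy
    rw [hlr x y hxy]
    constructor
    · rintro ⟨t, ht1, ht2⟩
      simp only [Set.mem_Icc] at *
      exact ⟨-t, ⟨by linarith [ht1.2], by linarith [ht1.1]⟩,
        ⟨by linarith [ht2.2], by linarith [ht2.1]⟩⟩
    · rintro ⟨t, ht1, ht2⟩
      simp only [Set.mem_Icc] at *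
      exact ⟨-t, ⟨by linarith [ht1.2], by linarith [ht1.1]⟩,
        ⟨by linarith [ht2.2], by linarith [ht2.1]⟩⟩
  have hN' : ∀ n ∈ N, -(r n) ≤ -p ∧ -p ≤ -(l n) := by
    intro n hn
    constructor <;> linarith [(hN n hn).1, (hN n hn).2]
  -- each bᵢ's interval avoids p
  have key : ∀ b b' : V, NbhdIncomp G N b b' → (∀ n ∈ N, c b ≠ c n) →
      r b < p ∨ p < l b := by
    intro b b' hbb' hcb
    by_contra h
    push_neg at h
    obtain ⟨hp1, hp2⟩ := h
    apply hbb'.2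
    intro n hn
    refine ⟨hn.1, ?_⟩
    simp only [SimpleGraph.mem_neighborSet]
    rw [hlr b n (hcb n hn.1)]
    refine ⟨p, ?_, ?_⟩ <;> simp only [Set.mem_Icc]
    · exact ⟨hp2, hp1⟩
    · exact hN n hn.1
  have s1 := key b1 b2 h12 hc1
  have s2 := key b2 b1 ⟨h12.2, h12.1⟩ hc2
  have s3 := key b3 b1 ⟨h13.2, h13.1⟩ hc3
  -- helper for a pair on the left of p
  have left : ∀ bi bj : V, (∀ n ∈ N, c bi ≠ c n) → (∀ n ∈ N, c bj ≠ c n) →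
      r bi < p → r bj < p → NbhdIncomp G N bi bj → False := by
    intro bi bj hci hcj hi hj hinc
    rcases le_total (r bi) (r bj) with h | h
    · exact twoLeft G c l r hlr N p hN bi bj hci hcj hj h hinc
    · exact twoLeft G c l r hlr N p hN bj bi hcj hci hi h ⟨hinc.2, hinc.1⟩
  -- helper for a pair on the right of p (via reflection)
  have right : ∀ bi bj : V, (∀ n ∈ N, c bi ≠ c n) → (∀ n ∈ N, c bj ≠ c n) →
      p < l bi → p < l bj → NbhdIncomp G N bi bj → False := by
    intro bi bj hci hcj hi hj hinc
    rcases le_total (-(l bi)) (-(l bj)) with h | h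
    · exact twoLeft G c (fun x => -(r x)) (fun x => -(l x)) hlr' N (-p) hN'
        bi bj hci hcj (show -(l bj) < -p by linarith) h hinc
    · exact twoLeft G c (fun x => -(r x)) (fun x => -(l x)) hlr' N (-p) hN'
        bj bi hcj hci (show -(l bi) < -p by linarith) h ⟨hinc.2, hinc.1⟩
  rcases s1 with s1 | s1 <;> rcases s2 with s2 | s2 <;> rcases s3 with s3 | s3
  · exact left b1 b2 hc1 hc2 s1 s2 h12
  · exact left b1 b2 hc1 hc2 s1 s2 h12
  · exact left b1 b3 hc1 hc3 s1 s3 h13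
  · exact right b2 b3 hc2 hc3 s2 s3 h23
  · exact left b2 b3 hc2 hc3 s2 s3 h23
  · exact right b1 b3 hc1 hc3 s1 s3 h13
  · exact right b1 b2 hc1 hc2 s1 s2 h12
  · exact right b1 b2 hc1 hc2 s1 s2 h12

/-- A bigraph containing an exobiclique is not an interval bigraph. -/
theorem stmt15 (G : SimpleGraph V) (c : V → Bool) [Fintype V]
    (hbip : ∀ x y : V, G.Adj x y → c x ≠ c y)
    (hexo : HasExobiclique G c) :
    ¬ IsIntervalBigraph G c := by
  rintro ⟨l, r, hlr⟩
  obtain ⟨M, N, hMne, hNne, hMc, hNc, hbic,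
    ⟨b1, b2, b3, -, -, -, hcb1, hcb2, hcb3, -, -, -, hb12, hb13, hb23⟩,
    ⟨w1, w2, w3, -, -, -, hcw1, hcw2, hcw3, -, -, -, hw12, hw13, hw23⟩⟩ := hexo
  -- cross-intersection inequalities
  have cross : ∀ m ∈ M, ∀ n ∈ N, l m ≤ r n ∧ l n ≤ r m := by
    intro m hm n hn
    have hc : c m ≠ c n := by rw [hMc m hm, hNc n hn]; simp
    obtain ⟨t, ht1, ht2⟩ := (hlr m n hc).mp (hbic m hm n hn)
    simp only [Set.mem_Icc] at ht1 ht2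
    exact ⟨le_trans ht1.1 ht2.2, le_trans ht2.1 ht1.2⟩
  obtain ⟨m0, hm0, hm0max⟩ := Set.exists_max_image M l M.toFinite hMne
  obtain ⟨n0, hn0, hn0max⟩ := Set.exists_max_image N l N.toFinite hNne
  rcases le_total (l n0) (l m0) with hcase | hcase
  · -- p = l m0 lies in all intervals of N
    have hN : ∀ n ∈ N, l n ≤ l m0 ∧ l m0 ≤ r n := by
      intro n hn
      exact ⟨le_trans (hn0max n hn) hcase, (cross m0 hm0 n hn).1⟩
    have hcb : ∀ b : V, c b = true → ∀ n ∈ N, c b ≠ c n := by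
      intro b hb n hn
      rw [hb, hNc n hn]; simp
    exact noThree G c l r hlr N (l m0) hN b1 b2 b3
      (hcb b1 hcb1) (hcb b2 hcb2) (hcb b3 hcb3) hb12 hb13 hb23
  · -- p = l n0 lies in all intervals of M
    have hM : ∀ m ∈ M, l m ≤ l n0 ∧ l n0 ≤ r m := by
      intro m hm
      exact ⟨le_trans (hm0max m hm) hcase, (cross m hm n0 hn0).2⟩
    have hcw : ∀ w : V, c w = false → ∀ m ∈ M, c w ≠ c m := by
      intro w hw m hm
      rw [hw, hMc m hm]; simp
    exact noThree G c l r hlr M (l n0) hM w1 w2 w3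
      (hcw w1 hcw1) (hcw w2 hcw2) (hcw w3 hcw3) hw12 hw13 hw23
end

section
/- A bipartite graph H (with fixed bipartition) is an interval bigraph if and only if its vertices admit a linear ordering < such that for all vertices a < b < c where a and b are in the same color class and c is in the opposite color class, if ac is an edge then bc is an edge. -/
variable {V : Type*}

/-- Ordering characterization of interval bigraphs (Hell–Huang): H is an interval
bigraph iff its vertices admit a linear ordering avoiding the forbidden patterns. -/
theorem stmt16 (G : SimpleGraph V) (c : V → Bool) [Fintype V]
    (hbip : ∀ x y : V, G.Adj x y → c x ≠ c y) :
    IsIntervalBigraph G c ↔ ∃ r : LinearOrder V, GoodOrder G c r := by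
  classical
  constructor
  · rintro ⟨l, r, h⟩
    set i : V → ℕ := fun v => ((Fintype.equivFin V) v : ℕ) with hi
    have hiinj : Function.Injective i := by
      intro a b hab
      exact (Fintype.equivFin V).injective (Fin.ext hab)
    set f : V → ℕ ×ₗ (ℝ ×ₗ ℕ) := fun v =>
      toLex ((if l v ≤ r v then 1 else 0), toLex (r v, i v)) with hf
    have hfinj : Function.Injective f := by
      intro a b hab
      apply hiinj
      have := congrArg (fun p : ℕ ×ₗ (ℝ ×ₗ ℕ) => (ofLex (ofLex p).2).2) hab
      simpa [hf] using this
    refine ⟨LinearOrder.lift' f hfinj, ?_⟩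
    intro a b x hab hbx hcab hcax hax
    obtain ⟨t0, ⟨hla, hra⟩, ⟨hlx, hrx⟩⟩ := (h a x hcax).mp hax
    have hnea : l a ≤ r a := le_trans hla hra
    have hnex : l x ≤ r x := le_trans hlx hrx
    have hab' : f a < f b := hab
    have hbx' : f b < f x := hbx
    rw [hf] at hab' hbx'
    simp only [Prod.Lex.lt_iff, ofLex_toLex, if_pos hnea, if_pos hnex] at hab' hbx'
    have hneb : l b ≤ r b := by
      by_contra hc
      rw [if_neg hc] at hab'
      rcases hab' with h1 | ⟨h1, _⟩ <;> omega
    rw [if_pos hneb] at hab' hbx'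
    have hrab : r a ≤ r b := by
      rcases hab' with h1 | ⟨_, h3 | ⟨h3, _⟩⟩
      · omega
      · exact le_of_lt h3
      · exact le_of_eq h3
    have hrbx : r b ≤ r x := by
      rcases hbx' with h1 | ⟨_, h3 | ⟨h3, _⟩⟩
      · omega
      · exact le_of_lt h3
      · exact le_of_eq h3
    have hcbx : c b ≠ c x := hcab ▸ hcax
    refine (h b x hcbx).mpr ⟨max (l b) (l x), ⟨le_max_left _ _, ?_⟩, ⟨le_max_right _ _, ?_⟩⟩
    · exact max_le hneb (le_trans (le_trans hlx hra) hrab)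
    · exact max_le (le_trans hneb hrbx) hnex
  · rintro ⟨ro, hro⟩
    letI := ro
    set n : V → ℕ := fun v => (Finset.univ.filter (fun u => u ≤ v)).card with hn
    have hmono : StrictMono n := by
      intro a b hab
      apply Finset.card_lt_card
      rw [Finset.ssubset_iff_of_subset (fun u hu => Finset.mem_filter.mpr
        ⟨Finset.mem_univ u, le_trans (Finset.mem_filter.mp hu).2 hab.le⟩)]
      exact ⟨b, Finset.mem_filter.mpr ⟨Finset.mem_univ b, le_refl b⟩,
        fun hmem => absurd (Finset.mem_filter.mp hmem).2 (not_le.mpr hab)⟩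
    set N : V → ℝ := fun v => (n v : ℝ) with hN
    have hNmono : StrictMono N := fun a b hab => by
      exact_mod_cast Nat.cast_lt.mpr (hmono hab)
    set L : V → ℝ := fun v =>
      (insert v (G.neighborFinset v)).inf' (Finset.insert_nonempty _ _) N with hL
    have hLle : ∀ v, L v ≤ N v := fun v =>
      Finset.inf'_le N (Finset.mem_insert_self v _)
    have key : ∀ x y : V, x < y → c x ≠ c y → L y ≤ N x → G.Adj x y := by
      intro x y hxy hcxy hLy
      obtain ⟨w, hw, hweq⟩ := Finset.exists_mem_eq_inf'
        (Finset.insert_nonempty y (G.neighborFinset y)) N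
      simp only [hL] at hLy
      rw [hweq] at hLy
      rcases Finset.mem_insert.mp hw with rfl | hw'
      · exact absurd hLy (not_le.mpr (hNmono hxy))
      · have hadjyw : G.Adj y w := (G.mem_neighborFinset y w).mp hw'
        rcases eq_or_lt_of_le hLy with heq | hlt
        · have : w = x := hNmono.injective heq
          exact (this ▸ hadjyw).symm
        · have hwx : w < x := hNmono.lt_iff_lt.mp hlt
          have hcwy : c w ≠ c y := fun h => hbip y w hadjyw h.symm
          have hcwx : c w = c x := by
            revert hcwy hcxy
            cases c w <;> cases c x <;> cases c y <;> simp
          exact hro w x y hwx hxy hcwx (hcwx ▸ hcxy) hadjyw.symm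
    refine ⟨L, N, fun x y hcxy => ?_⟩
    have hxy : x ≠ y := fun hxx => hcxy (hxx ▸ rfl)
    constructor
    · intro hadj
      rcases hxy.lt_or_gt with hlt | hlt
      · refine ⟨N x, ⟨hLle x, le_refl _⟩, ?_, (hNmono hlt).le⟩
        exact Finset.inf'_le N (Finset.mem_insert_of_mem
          ((G.mem_neighborFinset y x).mpr hadj.symm))
      · refine ⟨N y, ⟨?_, (hNmono hlt).le⟩, hLle y, le_refl _⟩
        exact Finset.inf'_le N (Finset.mem_insert_of_mem
          ((G.mem_neighborFinset x y).mpr hadj))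
    · rintro ⟨t, ⟨hlx, hrx⟩, ⟨hly, hry⟩⟩
      rcases hxy.lt_or_gt with hlt | hlt
      · exact key x y hlt hcxy (le_trans hly hrx)
      · exact (key y x hlt (Ne.symm hcxy) (le_trans hlx hry)).symm
end
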